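/- Let S = S(c,r) be a sphere in Euclidean 3-space with r > 0, let Π be a plane and p ∈ Π a point. The following are equivalent: (a) infinitely many lines L with L ⊆ Π and p ∈ L are tangent to S; (b) every line L with L ⊆ Π and p ∈ L is tangent to S; (c) S ∩ Π = {p}, i.e., S is tangent to the plane Π at the point p. -/

import Mathlib

noncomputable section

/-- Euclidean 3-space. -/
abbrev E3 : Type := EuclideanSpace ℝ (Fin 3)

/-- A line in `ℝ³`: a 1-dimensional affine subspace. -/
def IsLine (L : AffineSubspace ℝ E3) : Prop := Module.finrank ℝ L.direction = 1

/-- A plane in `ℝ³`: a 2-dimensional affine subspace. -/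
def IsPlane (P : AffineSubspace ℝ E3) : Prop := Module.finrank ℝ P.direction = 2

/-- A line is tangent to the sphere with centre `c` and radius `r` if the distance
from `c` to the line equals `r`. -/
def Tangent (c : E3) (r : ℝ) (L : AffineSubspace ℝ E3) : Prop :=
  Metric.infDist c (L : Set E3) = r

/-- A line `L` meets a line `ℓ` if they have a common point. -/
def Meets (L ℓ : AffineSubspace ℝ E3) : Prop :=
  ((L : Set E3) ∩ (ℓ : Set E3)).Nonempty

open Metric Real
open scoped RealInnerProductSpace

lemma mem_line_iff (p v x : E3) :
    x ∈ AffineSubspace.mk' p (Submodule.span ℝ {v}) ↔ ∃ t : ℝ, x = t • v +ᵥ p := by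
  rw [AffineSubspace.mem_mk', Submodule.mem_span_singleton]
  constructor
  · rintro ⟨t, ht⟩; exact ⟨t, by rw [ht]; simp⟩
  · rintro ⟨t, rfl⟩; exact ⟨t, by simp⟩

lemma infDist_line (c p v : E3) (hv : ‖v‖ = 1) :
    Metric.infDist c ((AffineSubspace.mk' p (Submodule.span ℝ {v}) : AffineSubspace ℝ E3) : Set E3)
      = Real.sqrt (‖c -ᵥ p‖^2 - ⟪c -ᵥ p, v⟫^2) := by
  set w : E3 := c -ᵥ p with hw
  have hdist : ∀ t : ℝ, dist c ((t • v) +ᵥ p) ^ 2 = (‖w‖^2 - ⟪w, v⟫^2) + (t - ⟪w, v⟫)^2 := by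
    intro t
    have : dist c ((t • v) +ᵥ p) = ‖w - t • v‖ := by
      rw [dist_eq_norm_vsub E3, vsub_vadd_eq_vsub_sub]
    rw [this, ← real_inner_self_eq_norm_sq]
    have h1 : ⟪v, v⟫ = 1 := by rw [real_inner_self_eq_norm_sq, hv]; norm_num
    rw [inner_sub_sub_self, real_inner_smul_left, real_inner_smul_right, real_inner_smul_left,
      real_inner_smul_right, real_inner_comm v w, h1, real_inner_self_eq_norm_sq w]
    ring
  have hkey : 0 ≤ ‖w‖^2 - ⟪w, v⟫^2 := by
    nlinarith [hdist ⟪w, v⟫, sq_nonneg (dist c ((⟪w, v⟫ • v) +ᵥ p))]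
  apply le_antisymm
  · have hmem : (⟪w, v⟫ • v) +ᵥ p ∈ (AffineSubspace.mk' p (Submodule.span ℝ {v}) : AffineSubspace ℝ E3) := by
      rw [mem_line_iff]; exact ⟨_, rfl⟩
    refine le_trans (Metric.infDist_le_dist_of_mem hmem) ?_
    have h0 : dist c ((⟪w, v⟫ • v) +ᵥ p) ^ 2 = ‖w‖^2 - ⟪w, v⟫^2 := by
      rw [hdist ⟪w, v⟫]; ring
    rw [← h0, Real.sqrt_sq dist_nonneg]
  · refine le_of_not_gt fun hlt => ?_
    have hne : ((AffineSubspace.mk' p (Submodule.span ℝ {v}) : AffineSubspace ℝ E3) : Set E3).Nonempty :=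
      ⟨p, AffineSubspace.self_mem_mk' _ _⟩
    obtain ⟨y, hy, hylt⟩ := (Metric.infDist_lt_iff hne).1 hlt
    obtain ⟨t, rfl⟩ := (mem_line_iff p v y).1 hy
    have h1 := hdist t
    have h2 : dist c ((t • v) +ᵥ p) ^ 2 < (Real.sqrt (‖w‖^2 - ⟪w, v⟫^2))^2 := by
      apply sq_lt_sq' _ hylt
      have := Real.sqrt_nonneg (‖w‖^2 - ⟪w, v⟫^2)
      nlinarith [dist_nonneg (x := c) (y := (t • v) +ᵥ p)]
    rw [Real.sq_sqrt hkey] at h2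
    nlinarith [sq_nonneg (t - ⟪w, v⟫)]
lemma tangent_iff (c p v : E3) (hv : ‖v‖ = 1) {r : ℝ} (hr : 0 < r) :
    Tangent c r (AffineSubspace.mk' p (Submodule.span ℝ {v})) ↔
      ⟪c -ᵥ p, v⟫^2 = ‖c -ᵥ p‖^2 - r^2 := by
  rw [Tangent, infDist_line c p v hv]
  constructor
  · intro h
    rcases le_or_gt 0 (‖c -ᵥ p‖^2 - ⟪c -ᵥ p, v⟫^2) with hX | hX
    · have := Real.sq_sqrt hX
      rw [h] at this; linarith
    · rw [Real.sqrt_eq_zero_of_nonpos hX.le] at h; linarith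
  · intro h
    have hX : ‖c -ᵥ p‖^2 - ⟪c -ᵥ p, v⟫^2 = r^2 := by linarith
    rw [hX, Real.sqrt_sq hr.le]

lemma span_smul_eq {v : E3} {a : ℝ} (ha : a ≠ 0) :
    Submodule.span ℝ {a • v} = Submodule.span ℝ {v} := by
  apply le_antisymm
  · rw [Submodule.span_le, Set.singleton_subset_iff]
    exact Submodule.smul_mem _ a (Submodule.mem_span_singleton_self v)
  · rw [Submodule.span_le, Set.singleton_subset_iff]
    refine Submodule.mem_span_singleton.2 ⟨a⁻¹, ?_⟩
    rw [smul_smul, inv_mul_cancel₀ ha, one_smul]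

lemma tangent_iff' (c p v : E3) (hv : v ≠ 0) {r : ℝ} (hr : 0 < r) :
    Tangent c r (AffineSubspace.mk' p (Submodule.span ℝ {v})) ↔
      ⟪c -ᵥ p, v⟫^2 = (‖c -ᵥ p‖^2 - r^2) * ‖v‖^2 := by
  have hnv : ‖v‖ ≠ 0 := norm_ne_zero_iff.2 hv
  have hs : Submodule.span ℝ {v} = Submodule.span ℝ {‖v‖⁻¹ • v} :=
    (span_smul_eq (by positivity)).symm
  have hu : ‖‖v‖⁻¹ • v‖ = 1 := by
    rw [norm_smul, norm_inv, norm_norm, inv_mul_cancel₀ hnv]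
  rw [hs, tangent_iff c p _ hu hr, real_inner_smul_right, mul_pow, inv_pow, inv_mul_eq_div,
    div_eq_iff (by positivity : (‖v‖:ℝ)^2 ≠ 0)]

lemma line_rep {L : AffineSubspace ℝ E3} (hL : IsLine L) {p : E3} (hp : p ∈ L) :
    ∃ v : E3, ‖v‖ = 1 ∧ L = AffineSubspace.mk' p (Submodule.span ℝ {v}) := by
  obtain ⟨v0, hv0, hspan⟩ := finrank_eq_one_iff'.1 hL
  have hdir : L.direction = Submodule.span ℝ {(v0 : E3)} := by
    apply le_antisymm
    · intro x hx
      obtain ⟨a, ha⟩ := hspan ⟨x, hx⟩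
      refine Submodule.mem_span_singleton.2 ⟨a, ?_⟩
      have := congrArg (Subtype.val) ha
      simpa using this
    · rw [Submodule.span_le, Set.singleton_subset_iff]
      exact v0.2
  have hv0' : (v0 : E3) ≠ 0 := fun h => hv0 (Subtype.ext h)
  have hnv : ‖(v0 : E3)‖ ≠ 0 := norm_ne_zero_iff.2 hv0'
  refine ⟨‖(v0:E3)‖⁻¹ • v0, ?_, ?_⟩
  · rw [norm_smul, norm_inv, norm_norm, inv_mul_cancel₀ hnv]
  · rw [span_smul_eq (by positivity), ← hdir]
    exact (AffineSubspace.mk'_eq hp).symm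

lemma line_subset_iff {P : AffineSubspace ℝ E3} {p : E3} (hpP : p ∈ P) (v : E3) :
    ((AffineSubspace.mk' p (Submodule.span ℝ {v}) : AffineSubspace ℝ E3) : Set E3) ⊆ (P : Set E3)
      ↔ v ∈ P.direction := by
  constructor
  · intro h
    have h1 : v +ᵥ p ∈ AffineSubspace.mk' p (Submodule.span ℝ {v}) := by
      rw [mem_line_iff]; exact ⟨1, by rw [one_smul]⟩
    have h2 : v +ᵥ p ∈ P := h h1
    simpa using AffineSubspace.vsub_mem_direction h2 hpP
  · intro hv x hx
    obtain ⟨t, rfl⟩ := (mem_line_iff p v x).1 hx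
    exact AffineSubspace.vadd_mem_of_mem_direction (Submodule.smul_mem _ t hv) hpP
lemma exists_orthonormal_pair (D : Submodule ℝ E3) (hD : Module.finrank ℝ D = 2) :
    ∃ e1 e2 : E3, e1 ∈ D ∧ e2 ∈ D ∧ ⟪e1,e1⟫ = 1 ∧ ⟪e2,e2⟫ = 1 ∧ ⟪e1,e2⟫ = 0 ∧
      (∀ t ∈ D, ∃ a b : ℝ, t = a • e1 + b • e2) := by
  let B := (stdOrthonormalBasis ℝ D).reindex (finCongr hD)
  have hB := B.orthonormal
  refine ⟨(B 0 : E3), (B 1 : E3), (B 0).2, (B 1).2, ?_, ?_, ?_, ?_⟩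
  · have h := hB.1 0
    have h2 : ⟪(B 0 : E3), (B 0 : E3)⟫ = ⟪B 0, B 0⟫ := rfl
    rw [h2, real_inner_self_eq_norm_sq, h]; norm_num
  · have h := hB.1 1
    have h2 : ⟪(B 1 : E3), (B 1 : E3)⟫ = ⟪B 1, B 1⟫ := rfl
    rw [h2, real_inner_self_eq_norm_sq, h]; norm_num
  · have h := hB.2 (show (0:Fin 2) ≠ 1 by decide)
    exact h
  · intro t ht
    have := B.sum_repr ⟨t, ht⟩
    rw [Fin.sum_univ_two] at this
    refine ⟨B.repr ⟨t, ht⟩ 0, B.repr ⟨t, ht⟩ 1, ?_⟩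
    have := congrArg (Subtype.val) this
    simpa using this.symm
lemma sphere_inter_eq_iff (c : E3) {r : ℝ} (hr : 0 < r) (P : AffineSubspace ℝ E3)
    {p : E3} (hpP : p ∈ P) :
    Metric.sphere c r ∩ (P : Set E3) = {p} ↔
      (∀ t ∈ P.direction, ⟪c -ᵥ p, t⟫ = 0) ∧ ‖c -ᵥ p‖ = r := by
  set w : E3 := c -ᵥ p with hw
  have hdist : ∀ t : E3, dist c (t +ᵥ p) ^ 2 = ‖w‖^2 - 2*⟪w,t⟫ + ‖t‖^2 := by
    intro t
    rw [dist_eq_norm_vsub E3, vsub_vadd_eq_vsub_sub, ← hw, norm_sub_sq_real]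
  constructor
  · intro h
    have hpmem : p ∈ Metric.sphere c r ∩ (P : Set E3) := h.symm ▸ Set.mem_singleton p
    have hnorm : ‖w‖ = r := by
      have := hpmem.1
      rwa [Metric.mem_sphere', dist_eq_norm_vsub E3] at this
    refine ⟨fun t ht => ?_, hnorm⟩
    by_contra h0
    have htne : t ≠ 0 := by rintro rfl; simp at h0
    have htn : (0:ℝ) < ‖t‖ := norm_pos_iff.2 htne
    set s : ℝ := 2*⟪w,t⟫/‖t‖^2 with hs
    have hsne : s ≠ 0 := div_ne_zero (mul_ne_zero two_ne_zero h0) (by positivity)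
    have hxP : s • t +ᵥ p ∈ P := AffineSubspace.vadd_mem_of_mem_direction
      (Submodule.smul_mem _ s ht) hpP
    have hd2 : dist c (s • t +ᵥ p) ^ 2 = r ^ 2 := by
      rw [hdist (s • t), real_inner_smul_right, norm_smul, mul_pow, Real.norm_eq_abs, sq_abs, hnorm, hs]
      have h1 : ‖t‖ ≠ 0 := htn.ne'
      field_simp
      ring
    have hdr : dist c (s • t +ᵥ p) = r := by
      have h3 : (dist c (s • t +ᵥ p) - r) * (dist c (s • t +ᵥ p) + r) = 0 := by nlinarith
      rcases mul_eq_zero.1 h3 with h4 | h4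
      · linarith
      · have := dist_nonneg (x := c) (y := s • t +ᵥ p); linarith
    have hxS : s • t +ᵥ p ∈ Metric.sphere c r ∩ (P : Set E3) :=
      ⟨Metric.mem_sphere'.2 hdr, hxP⟩
    rw [h, Set.mem_singleton_iff] at hxS
    have : s • t = 0 := by
      have := congrArg (· -ᵥ p) hxS
      simpa using this
    rcases smul_eq_zero.1 this with h4 | h4
    · exact hsne h4
    · exact htne h4
  · rintro ⟨horth, hnorm⟩
    ext x
    simp only [Set.mem_inter_iff, Set.mem_singleton_iff]
    constructor
    · rintro ⟨hxS, hxP⟩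
      have ht : x -ᵥ p ∈ P.direction := AffineSubspace.vsub_mem_direction hxP hpP
      have hx : x = (x -ᵥ p) +ᵥ p := (vsub_vadd x p).symm
      have hd : dist c x = r := Metric.mem_sphere'.1 hxS
      have h2 := hdist (x -ᵥ p)
      rw [← hx, horth _ ht, hd] at h2
      have h3 : ‖x -ᵥ p‖ = 0 := by nlinarith [norm_nonneg (x -ᵥ p)]
      have h4 : x -ᵥ p = 0 := norm_eq_zero.1 h3
      rw [← vsub_vadd x p, h4, zero_vadd]
    · rintro rfl
      refine ⟨Metric.mem_sphere'.2 ?_, hpP⟩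
      rw [dist_eq_norm_vsub E3, ← hw, hnorm]
lemma quad_finite (A B C : ℝ) (hne : ¬(A = 0 ∧ B = 0 ∧ C = 0)) (e1 e2 p : E3)
    (S : Set (AffineSubspace ℝ E3))
    (hS : ∀ L ∈ S, ∃ a b : ℝ, ¬(a = 0 ∧ b = 0) ∧ A*a^2 + B*(a*b) + C*b^2 = 0 ∧
        L = AffineSubspace.mk' p (Submodule.span ℝ {a • e1 + b • e2})) :
    S.Finite := by
  classical
  set q : Polynomial ℝ :=
    Polynomial.C A * Polynomial.X^2 + Polynomial.C B * Polynomial.X + Polynomial.C C with hqdef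
  have hq0 : q ≠ 0 := by
    intro h
    apply hne
    have h2 : q.coeff 2 = A := by
      simp [hqdef, Polynomial.coeff_add, Polynomial.coeff_C_mul, Polynomial.coeff_X_pow,
        Polynomial.coeff_C, Polynomial.coeff_X]
    have h1 : q.coeff 1 = B := by
      simp [hqdef, Polynomial.coeff_add, Polynomial.coeff_C_mul, Polynomial.coeff_X_pow,
        Polynomial.coeff_C, Polynomial.coeff_X]
    have h0 : q.coeff 0 = C := by
      simp [hqdef, Polynomial.coeff_add, Polynomial.coeff_C_mul, Polynomial.coeff_X_pow,
        Polynomial.coeff_C, Polynomial.coeff_X]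
    rw [h, Polynomial.coeff_zero] at h2 h1 h0
    exact ⟨h2.symm, h1.symm, h0.symm⟩
  have hroots : {x : ℝ | q.IsRoot x}.Finite := Polynomial.finite_setOf_isRoot hq0
  haveI : Finite {x : ℝ | q.IsRoot x} := hroots.to_subtype
  have hroot : ∀ (L : S), (hS L.1 L.2).choose_spec.choose ≠ 0 →
      q.IsRoot ((hS L.1 L.2).choose / (hS L.1 L.2).choose_spec.choose) := by
    intro L hb
    have hquad := (hS L.1 L.2).choose_spec.choose_spec.2.1
    set a := (hS L.1 L.2).choose
    set b := (hS L.1 L.2).choose_spec.choose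
    have key : A*(a/b)^2 + B*(a/b) + C = (A*a^2 + B*(a*b) + C*b^2)/b^2 := by
      field_simp
    simp only [Polynomial.IsRoot, hqdef, Polynomial.eval_add, Polynomial.eval_mul,
      Polynomial.eval_pow, Polynomial.eval_C, Polynomial.eval_X]
    rw [key, hquad, zero_div]
  let f : S → Option {x : ℝ | q.IsRoot x} := fun L =>
    if hb : (hS L.1 L.2).choose_spec.choose = 0 then none
    else some ⟨(hS L.1 L.2).choose / (hS L.1 L.2).choose_spec.choose, hroot L hb⟩
  have hinj : Function.Injective f := by
    intro L1 L2 hf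
    have hL1 := (hS L1.1 L1.2).choose_spec.choose_spec
    have hL2 := (hS L2.1 L2.2).choose_spec.choose_spec
    set a1 := (hS L1.1 L1.2).choose with ha1d
    set b1 := (hS L1.1 L1.2).choose_spec.choose with hb1d
    set a2 := (hS L2.1 L2.2).choose with ha2d
    set b2 := (hS L2.1 L2.2).choose_spec.choose with hb2d
    by_cases hb1 : b1 = 0 <;> by_cases hb2 : b2 = 0
    · have ha1 : a1 ≠ 0 := fun h => hL1.1 ⟨h, hb1⟩
      have ha2 : a2 ≠ 0 := fun h => hL2.1 ⟨h, hb2⟩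
      have e1eq : L1.1 = AffineSubspace.mk' p (Submodule.span ℝ {e1}) := by
        rw [hL1.2.2, hb1, zero_smul, add_zero, span_smul_eq ha1]
      have e2eq : L2.1 = AffineSubspace.mk' p (Submodule.span ℝ {e1}) := by
        rw [hL2.2.2, hb2, zero_smul, add_zero, span_smul_eq ha2]
      exact Subtype.ext (e1eq.trans e2eq.symm)
    · simp only [f, dif_pos (show (hS L1.1 L1.2).choose_spec.choose = 0 from hb1), dif_neg (show ¬(hS L2.1 L2.2).choose_spec.choose = 0 from hb2)] at hf
      exact absurd hf (by simp)
    · simp only [f, dif_neg (show ¬(hS L1.1 L1.2).choose_spec.choose = 0 from hb1), dif_pos (show (hS L2.1 L2.2).choose_spec.choose = 0 from hb2)] at hf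
      exact absurd hf (by simp)
    · simp only [f, dif_neg (show ¬(hS L1.1 L1.2).choose_spec.choose = 0 from hb1), dif_neg (show ¬(hS L2.1 L2.2).choose_spec.choose = 0 from hb2), Option.some_inj, Subtype.mk_eq_mk] at hf
      have hcross : a1 * b2 = a2 * b1 := by
        rw [div_eq_div_iff hb1 hb2] at hf; linarith
      have hveq : a1 • e1 + b1 • e2 = (b1/b2) • (a2 • e1 + b2 • e2) := by
        rw [smul_add, smul_smul, smul_smul]
        congr 1
        · congr 1; field_simp; linarith [hcross]
        · congr 1; field_simp
      have : L1.1 = L2.1 := by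
        rw [hL1.2.2, hL2.2.2, hveq, span_smul_eq (div_ne_zero hb1 hb2)]
      exact Subtype.ext this
  haveI : Finite (Option {x : ℝ | q.IsRoot x}) :=
    Finite.of_equiv _ (Equiv.optionEquivSumPUnit.{0,0} _).symm
  have : Finite S := Finite.of_injective f hinj
  exact Set.finite_coe_iff.mp this

set_option maxHeartbeats 2000000 in
/-- For a sphere `S(c,r)`, a plane `P` and a point `p ∈ P`, the following are
equivalent: (a) infinitely many lines of `P` through `p` are tangent to the sphere;
(b) every line of `P` through `p` is tangent to the sphere; (c) the sphere meets `P`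
exactly in `{p}`. -/
theorem pencil_tangency_tfae
    (c : E3) (r : ℝ) (hr : 0 < r)
    (P : AffineSubspace ℝ E3) (hP : IsPlane P) (p : E3) (hpP : p ∈ P) :
    ({L : AffineSubspace ℝ E3 | IsLine L ∧ (L : Set E3) ⊆ (P : Set E3) ∧ p ∈ L ∧
        Tangent c r L}.Infinite ↔
      Metric.sphere c r ∩ (P : Set E3) = {p}) ∧
    ((∀ L : AffineSubspace ℝ E3, IsLine L → (L : Set E3) ⊆ (P : Set E3) → p ∈ L →
        Tangent c r L) ↔
      Metric.sphere c r ∩ (P : Set E3) = {p}) := by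
  classical
  obtain ⟨e1, e2, he1D, he2D, h11, h22, h12, hexp⟩ := exists_orthonormal_pair P.direction hP
  have hn1 : ‖e1‖^2 = 1 := by rw [← real_inner_self_eq_norm_sq]; exact h11
  have hn2 : ‖e2‖^2 = 1 := by rw [← real_inner_self_eq_norm_sq]; exact h22
  have h21 : ⟪e2, e1⟫ = 0 := by rw [real_inner_comm]; exact h12
  -- the tangency criterion in coordinates
  have hcrit : (Metric.sphere c r ∩ (P : Set E3) = {p}) ↔
      (⟪c -ᵥ p, e1⟫ = 0 ∧ ⟪c -ᵥ p, e2⟫ = 0 ∧ ‖c -ᵥ p‖^2 - r^2 = 0) := by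
    rw [sphere_inter_eq_iff c hr P hpP]
    constructor
    · rintro ⟨horth, hnorm⟩
      exact ⟨horth e1 he1D, horth e2 he2D, by rw [hnorm]; ring⟩
    · rintro ⟨ha, hb, hk⟩
      have hnorm : ‖c -ᵥ p‖ = r := by nlinarith [norm_nonneg (c -ᵥ p), hr]
      refine ⟨fun t ht => ?_, hnorm⟩
      obtain ⟨a, b, rfl⟩ := hexp t ht
      rw [inner_add_right, real_inner_smul_right, real_inner_smul_right, ha, hb]
      ring
  -- key: a line through p with direction v in P is tangent iff ⟪w,v⟫² = (‖c -ᵥ p‖²-r²)‖v‖²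
  have hbkey : ∀ v : E3, v ≠ 0 →
      (Tangent c r (AffineSubspace.mk' p (Submodule.span ℝ {v})) ↔
        ⟪c -ᵥ p, v⟫^2 = (‖c -ᵥ p‖^2 - r^2) * ‖v‖^2) := fun v hv => tangent_iff' c p v hv hr
  -- (c) → (b)
  have hcb : (⟪c -ᵥ p, e1⟫ = 0 ∧ ⟪c -ᵥ p, e2⟫ = 0 ∧ ‖c -ᵥ p‖^2 - r^2 = 0) →
      ∀ L : AffineSubspace ℝ E3, IsLine L → (L : Set E3) ⊆ (P : Set E3) → p ∈ L →
        Tangent c r L := by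
    rintro ⟨ha, hb, hk⟩ L hL hsub hpL
    obtain ⟨v, hvu, rfl⟩ := line_rep hL hpL
    have hvne : v ≠ 0 := by intro h; rw [h, norm_zero] at hvu; norm_num at hvu
    have hvD : v ∈ P.direction := (line_subset_iff hpP v).1 hsub
    rw [hbkey v hvne, hk]
    obtain ⟨a, b, rfl⟩ := hexp v hvD
    rw [inner_add_right, real_inner_smul_right, real_inner_smul_right, ha, hb]
    ring
  -- (b) → (c)
  have hbc : (∀ L : AffineSubspace ℝ E3, IsLine L → (L : Set E3) ⊆ (P : Set E3) → p ∈ L →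
      Tangent c r L) → (⟪c -ᵥ p, e1⟫ = 0 ∧ ⟪c -ᵥ p, e2⟫ = 0 ∧ ‖c -ᵥ p‖^2 - r^2 = 0) := by
    intro hall
    have key : ∀ v : E3, v ∈ P.direction → v ≠ 0 → ⟪c -ᵥ p, v⟫^2 = (‖c -ᵥ p‖^2 - r^2) * ‖v‖^2 := by
      intro v hvD hvne
      have hline : IsLine (AffineSubspace.mk' p (Submodule.span ℝ {v})) := by
        rw [IsLine, AffineSubspace.direction_mk']
        exact finrank_span_singleton hvne
      have hsub := (line_subset_iff hpP v).2 hvD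
      exact (hbkey v hvne).1 (hall _ hline hsub (AffineSubspace.self_mem_mk' _ _))
    have he1ne : e1 ≠ 0 := by intro h; rw [h, inner_zero_left] at h11; norm_num at h11
    have he2ne : e2 ≠ 0 := by intro h; rw [h, inner_zero_left] at h22; norm_num at h22
    have h1 := key e1 he1D he1ne
    have h2 := key e2 he2D he2ne
    have hsumn : ‖e1 + e2‖^2 = 2 := by
      rw [← real_inner_self_eq_norm_sq, inner_add_add_self, h11, h22, h12, h21]; ring
    have hsumne : e1 + e2 ≠ 0 := by
      intro h; rw [h, norm_zero] at hsumn; norm_num at hsumn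
    have h3 := key (e1 + e2) (add_mem he1D he2D) hsumne
    rw [hsumn] at h3
    rw [hn1] at h1
    rw [hn2] at h2
    rw [inner_add_right] at h3
    have hab : ⟪c -ᵥ p, e1⟫ * ⟪c -ᵥ p, e2⟫ = 0 := by nlinarith
    have hk : ‖c -ᵥ p‖^2 - r^2 = 0 := by
      rcases mul_eq_zero.1 hab with h | h
      · rw [h] at h1; nlinarith
      · rw [h] at h2; nlinarith
    rw [hk] at h1 h2
    exact ⟨by nlinarith, by nlinarith, hk⟩
  refine ⟨?_, ?_⟩
  · rw [hcrit]
    constructor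
    · -- infinitely many tangent lines → tangency criterion
      intro hinf
      by_contra hne
      have hABC : ¬((⟪c -ᵥ p, e1⟫^2 - (‖c -ᵥ p‖^2 - r^2)) = 0 ∧
          (2*⟪c -ᵥ p, e1⟫*⟪c -ᵥ p, e2⟫) = 0 ∧
          (⟪c -ᵥ p, e2⟫^2 - (‖c -ᵥ p‖^2 - r^2)) = 0) := by
        rintro ⟨hA, hB, hC⟩
        apply hne
        have hab : ⟪c -ᵥ p, e1⟫ * ⟪c -ᵥ p, e2⟫ = 0 := by linarith
        have hk : ‖c -ᵥ p‖^2 - r^2 = 0 := by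
          rcases mul_eq_zero.1 hab with h | h
          · nlinarith
          · nlinarith
        exact ⟨by nlinarith, by nlinarith, hk⟩
      have hrep : ∀ L ∈ {L : AffineSubspace ℝ E3 | IsLine L ∧ (L : Set E3) ⊆ (P : Set E3) ∧
          p ∈ L ∧ Tangent c r L}, ∃ a b : ℝ, ¬(a = 0 ∧ b = 0) ∧
          (⟪c -ᵥ p, e1⟫^2 - (‖c -ᵥ p‖^2 - r^2))*a^2 +
            (2*⟪c -ᵥ p, e1⟫*⟪c -ᵥ p, e2⟫)*(a*b) +
            (⟪c -ᵥ p, e2⟫^2 - (‖c -ᵥ p‖^2 - r^2))*b^2 = 0 ∧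
          L = AffineSubspace.mk' p (Submodule.span ℝ {a • e1 + b • e2}) := by
        rintro L ⟨hline, hsub, hpL, htan⟩
        obtain ⟨v, hvu, rfl⟩ := line_rep hline hpL
        have hvne : v ≠ 0 := by intro h; rw [h, norm_zero] at hvu; norm_num at hvu
        have hvD : v ∈ P.direction := (line_subset_iff hpP v).1 hsub
        have htanval := (hbkey v hvne).1 htan
        obtain ⟨a, b, hab⟩ := hexp v hvD
        refine ⟨a, b, ?_, ?_, by rw [hab]⟩
        · rintro ⟨rfl, rfl⟩
          rw [zero_smul, zero_smul, add_zero] at hab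
          rw [hab, norm_zero] at hvu; norm_num at hvu
        · have hI : ⟪c -ᵥ p, v⟫ = a*⟪c -ᵥ p, e1⟫ + b*⟪c -ᵥ p, e2⟫ := by
            rw [hab, inner_add_right, real_inner_smul_right, real_inner_smul_right]
          have hN : ‖v‖^2 = a^2 + b^2 := by
            rw [← real_inner_self_eq_norm_sq, hab]
            simp only [inner_add_left, inner_add_right, real_inner_smul_left,
              real_inner_smul_right, h11, h22, h12, h21]
            ring
          rw [hI, hN] at htanval
          linear_combination htanval
      exact hinf (quad_finite _ _ _ hABC e1 e2 p _ hrep)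
    · -- tangency criterion → infinitely many tangent lines
      intro hc
      have htang := hcb hc
      have hvne : ∀ s : ℝ, e1 + s • e2 ≠ 0 := by
        intro s h
        have h0 : ⟪e1 + s • e2, e1⟫ = 0 := by rw [h, inner_zero_left]
        rw [inner_add_left, real_inner_smul_left, h11, h21] at h0
        norm_num at h0
      have hmem : ∀ s : ℝ,
          AffineSubspace.mk' p (Submodule.span ℝ {e1 + s • e2}) ∈
            {L : AffineSubspace ℝ E3 | IsLine L ∧ (L : Set E3) ⊆ (P : Set E3) ∧
              p ∈ L ∧ Tangent c r L} := by
        intro s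
        have hline : IsLine (AffineSubspace.mk' p (Submodule.span ℝ {e1 + s • e2})) := by
          rw [IsLine, AffineSubspace.direction_mk']
          exact finrank_span_singleton (hvne s)
        have hsub : ((AffineSubspace.mk' p (Submodule.span ℝ {e1 + s • e2}) :
            AffineSubspace ℝ E3) : Set E3) ⊆ (P : Set E3) :=
          (line_subset_iff hpP _).2 (add_mem he1D (Submodule.smul_mem _ s he2D))
        exact ⟨hline, hsub, AffineSubspace.self_mem_mk' _ _,
          htang _ hline hsub (AffineSubspace.self_mem_mk' _ _)⟩
      have hinj : Function.Injective
          (fun s : ℝ => AffineSubspace.mk' p (Submodule.span ℝ {e1 + s • e2})) := by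
        intro s s' h
        simp only at h
        have hd := congrArg AffineSubspace.direction h
        rw [AffineSubspace.direction_mk', AffineSubspace.direction_mk'] at hd
        have hm : e1 + s • e2 ∈ Submodule.span ℝ {e1 + s' • e2} := by
          rw [← hd]; exact Submodule.mem_span_singleton_self _
        obtain ⟨t, ht⟩ := Submodule.mem_span_singleton.1 hm
        rw [smul_add, smul_smul] at ht
        have h1 := congrArg (fun x => ⟪x, e1⟫) ht
        have h2 := congrArg (fun x => ⟪x, e2⟫) ht
        simp only [inner_add_left, real_inner_smul_left, h11, h21, h12, h22] at h1 h2
        ring_nf at h1 h2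
        have ht1 : t = 1 := by linarith
        rw [ht1] at h2
        linarith
      exact Set.infinite_of_injective_forall_mem hinj hmem
  · rw [hcrit]
    exact ⟨hbc, hcb⟩
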